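/- For λ ∈ ℂ, the map R(λ)(x₁,x₂,x₃) = (x₁x₂/D, D, x₂x₃/D) with D = x₁+x₃+λx₁x₂x₃ is involutive wherever the relevant denominators are nonzero. -/

import Mathlib

/-- The denominator `D = x₁ + x₃ + λx₁x₂x₃` of Sergeev's electrical solution. -/
def Dden (l : ℂ) (p : ℂ × ℂ × ℂ) : ℂ := p.1 + p.2.2 + l * p.1 * p.2.1 * p.2.2

/-- Sergeev's electrical tetrahedron map `R(λ)`. -/
noncomputable def Relec (l : ℂ) (p : ℂ × ℂ × ℂ) : ℂ × ℂ × ℂ :=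
  (p.1 * p.2.1 / Dden l p, Dden l p, p.2.1 * p.2.2 / Dden l p)

/-- `R(λ)` is involutive wherever the relevant denominators are nonzero. -/
theorem Rel_involutive (l : ℂ) (p : ℂ × ℂ × ℂ)
    (h1 : Dden l p ≠ 0) (h2 : Dden l (Relec l p) ≠ 0) :
    Relec l (Relec l p) = p := by
  obtain ⟨x1, x2, x3⟩ := p
  have hD' : Dden l (Relec l (x1, x2, x3)) = x2 := by
    simp only [Dden, Relec] at *
    generalize hD : x1 + x3 + l * x1 * x2 * x3 = D at h1 ⊢
    rw [mul_assoc l, div_mul_cancel₀ _ h1, ← mul_div_assoc, ← add_div, ← add_div, div_eq_iff h1, ← hD]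
    ring
  have hx2 : x2 ≠ 0 := hD' ▸ h2
  simp only [Relec, hD'] at *
  simp only [Dden, Relec] at *
  field_simp
  have h1' : x1 + x3 + x1 * x2 * x3 * l ≠ 0 := by
    rwa [show x1 * x2 * x3 * l = l * x1 * x2 * x3 by ring]
  simp [mul_div_assoc, div_self h1']
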